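/- arXiv:2312.06840 — 3 statements merged into one kernel-verified Lean document; each statement's English description precedes it below -/
import Mathlib

section
/- Let 𝓤 be a finite collection of pairwise disjoint closed disks in the plane, K a compact set disjoint from all of them, and for B ∈ 𝓤 let V_B = { z ∉ K : dist(z,B) < dist(z,B') for all B' ≠ B in 𝓤 }. If the closure of V_B is disjoint from K, then V_B is star-like with respect to the center of B: for every z ∈ V_B, the segment from the center of B to z lies in V_B. -/
open Metric

lemma infDist_closedBall_eq (x c : ℂ) (r : ℝ) (hr : 0 ≤ r) :
    infDist x (closedBall c r) = max (dist x c - r) 0 := by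
  rcases le_or_gt (dist x c) r with h | h
  · rw [infDist_zero_of_mem (mem_closedBall.2 h), max_eq_right (by linarith)]
  · have hd : (0:ℝ) < dist x c := lt_of_le_of_lt hr h
    rw [max_eq_left (by linarith)]
    apply le_antisymm
    · set y : ℂ := c + (r / dist x c) • (x - c) with hy
      have hnorm : dist x c = ‖x - c‖ := dist_eq_norm x c
      have hyc : dist y c = r := by
        rw [dist_eq_norm]
        have : y - c = (r / dist x c) • (x - c) := by rw [hy]; ring
        rw [this, norm_smul, Real.norm_eq_abs, ← hnorm,
          abs_of_nonneg (div_nonneg hr hd.le)]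
        field_simp
      have hxy : dist x y = dist x c - r := by
        have h1 : x - y = (1 - r / dist x c) • (x - c) := by
          rw [hy, sub_smul, one_smul]; ring
        rw [dist_eq_norm, h1, norm_smul, Real.norm_eq_abs, ← hnorm,
          abs_of_nonneg (by rw [sub_nonneg]; exact div_le_one_of_le₀ h.le dist_nonneg)]
        field_simp
      calc infDist x (closedBall c r) ≤ dist x y :=
            infDist_le_dist_of_mem (mem_closedBall.2 hyc.le)
        _ = dist x c - r := hxy
    · by_contra hcon
      push_neg at hcon
      obtain ⟨y, hy, hxy⟩ := (infDist_lt_iff (nonempty_closedBall.2 hr)).1 hcon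
      have : dist y c ≤ r := mem_closedBall.1 hy
      linarith [dist_triangle x y c]

/-- If the closure of a Voronoi cell `V_B` avoids `K`, then `V_B` is star-like with
respect to the center of `B`. -/
theorem stmt5 {ι : Type*} [Fintype ι] [Nonempty ι] (c : ι → ℂ) (r : ι → ℝ)
    (hr : ∀ i, 0 ≤ r i)
    (hdisj : Pairwise (Function.onFun Disjoint fun i => closedBall (c i) (r i)))
    (K : Set ℂ) (hK : IsCompact K)
    (hKdisj : ∀ i, Disjoint K (closedBall (c i) (r i)))
    (V : ι → Set ℂ)
    (hV : ∀ i, V i = {z : ℂ | z ∉ K ∧ ∀ j, j ≠ i →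
      infDist z (closedBall (c i) (r i)) < infDist z (closedBall (c j) (r j))})
    (i : ι) (hcl : Disjoint (closure (V i)) K) :
    ∀ z ∈ V i, segment ℝ (c i) z ⊆ V i := by
  intro z hz
  rw [hV i] at hz
  obtain ⟨hzK, hzlt⟩ := hz
  set f : ℝ → ℂ := fun t => (1 - t) • c i + t • z with hf
  have hfc : Continuous f := by fun_prop
  have hf0 : f 0 = c i := by simp [hf]
  -- distance computations along the segment
  have hwc : ∀ t : ℝ, 0 ≤ t → dist (f t) (c i) = t * dist z (c i) := by
    intro t ht
    have h1 : f t - c i = t • (z - c i) := by rw [hf]; module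
    rw [dist_eq_norm, h1, norm_smul, Real.norm_eq_abs, abs_of_nonneg ht, ← dist_eq_norm]
  have hzw : ∀ t : ℝ, t ≤ 1 → dist z (f t) = (1 - t) * dist z (c i) := by
    intro t ht
    have h1 : z - f t = (1 - t) • (z - c i) := by rw [hf]; module
    rw [dist_eq_norm, h1, norm_smul, Real.norm_eq_abs, abs_of_nonneg (by linarith),
      ← dist_eq_norm]
  -- the distance inequalities hold along the whole segment
  have key : ∀ t ∈ Set.Icc (0:ℝ) 1, ∀ j, j ≠ i →
      infDist (f t) (closedBall (c i) (r i)) < infDist (f t) (closedBall (c j) (r j)) := by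
    rintro t ⟨ht0, ht1⟩ j hj
    have hdij : Disjoint (closedBall (c i) (r i)) (closedBall (c j) (r j)) :=
      hdisj (Ne.symm hj)
    rcases le_or_gt (t * dist z (c i)) (r i) with hcase | hcase
    · -- f t lies in the disk B i
      have hfi : f t ∈ closedBall (c i) (r i) := by
        rw [mem_closedBall, hwc t ht0]; exact hcase
      have hfj : f t ∉ closedBall (c j) (r j) := fun h =>
        Set.disjoint_left.1 hdij hfi h
      rw [infDist_zero_of_mem hfi]
      exact (IsClosed.notMem_iff_infDist_pos isClosed_closedBall
        (nonempty_closedBall.2 (hr j))).1 hfj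
    · -- f t lies outside B i
      have hd : r i < dist z (c i) :=
        lt_of_lt_of_le hcase (by nlinarith [@dist_nonneg ℂ _ z (c i)])
      have hzi : infDist z (closedBall (c i) (r i)) = dist z (c i) - r i := by
        rw [infDist_closedBall_eq _ _ _ (hr i), max_eq_left (by linarith)]
      have hwi : infDist (f t) (closedBall (c i) (r i)) = t * dist z (c i) - r i := by
        rw [infDist_closedBall_eq _ _ _ (hr i), hwc t ht0, max_eq_left (by linarith)]
      have htri : infDist z (closedBall (c j) (r j)) ≤
          infDist (f t) (closedBall (c j) (r j)) + dist z (f t) :=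
        infDist_le_infDist_add_dist
      have hzj := hzlt j hj
      rw [hzi] at hzj
      rw [hzw t ht1] at htri
      rw [hwi]
      linarith
  -- points of the segment avoid K
  have noK : ∀ t ∈ Set.Icc (0:ℝ) 1, f t ∉ K := by
    by_contra hcon
    push_neg at hcon
    obtain ⟨t1, ht1, hft1⟩ := hcon
    set T : Set ℝ := {t | t ∈ Set.Icc (0:ℝ) 1 ∧ f t ∈ K} with hT
    have hTclosed : IsClosed T := isClosed_Icc.inter (hK.isClosed.preimage hfc)
    have hTne : T.Nonempty := ⟨t1, ht1, hft1⟩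
    have hTbdd : BddBelow T := ⟨0, fun t ht => ht.1.1⟩
    set t0 := sInf T with ht0def
    have ht0T : t0 ∈ T := hTclosed.csInf_mem hTne hTbdd
    have hciK : c i ∉ K := fun h =>
      Set.disjoint_left.1 (hKdisj i) h (mem_closedBall_self (hr i))
    have ht0pos : 0 < t0 := by
      rcases lt_or_eq_of_le ht0T.1.1 with h | h
      · exact h
      · exact absurd (h ▸ ht0T.2) (by rw [hf0]; exact hciK)
    -- points strictly before t0 are in V i
    have hVmem : ∀ t ∈ Set.Ico 0 t0, f t ∈ V i := by
      rintro t ⟨ht0', htlt⟩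
      have htIcc : t ∈ Set.Icc (0:ℝ) 1 := ⟨ht0', le_trans htlt.le ht0T.1.2⟩
      have htK : f t ∉ K := fun h => absurd (csInf_le hTbdd ⟨htIcc, h⟩) (not_le.2 htlt)
      rw [hV i]
      exact ⟨htK, key t htIcc⟩
    have htend : Filter.Tendsto f (nhdsWithin t0 (Set.Iio t0)) (nhds (f t0)) :=
      (hfc.tendsto t0).mono_left nhdsWithin_le_nhds
    have hev : ∀ᶠ t in nhdsWithin t0 (Set.Iio t0), f t ∈ V i := by
      filter_upwards [Ico_mem_nhdsLT_of_mem (Set.mem_Ioc.2 ⟨ht0pos, le_refl t0⟩)]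
        with t ht using hVmem t ht
    have hclo : f t0 ∈ closure (V i) := mem_closure_of_tendsto htend hev
    exact Set.disjoint_left.1 hcl hclo ht0T.2
  -- conclude
  rintro w ⟨a, b, ha, hb, hab, rfl⟩
  have hfw : a • c i + b • z = f b := by
    have hab' : a = 1 - b := by linarith
    rw [hf, hab']
  have hbI : b ∈ Set.Icc (0:ℝ) 1 := ⟨hb, by linarith⟩
  rw [hfw, hV i]
  exact ⟨noK b hbI, key b hbI⟩
end

section
/- Let V ⊆ ℂ be a bounded open set that is star-like with respect to a point z_0 ∈ V. Then ℂ \ V̄ is connected, and consequently ℂ \ ∂V has exactly two connected components, namely V and ℂ \ V̄. -/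
open Metric

private lemma star_closure {z₀ : ℂ} {V : Set ℂ} (hs : StarConvex ℝ z₀ V) :
    StarConvex ℝ z₀ (closure V) := by
  intro y hy a b ha hb hab
  have hc : Continuous fun x : ℂ => a • z₀ + b • x := by fun_prop
  exact map_mem_closure (f := fun x : ℂ => a • z₀ + b • x) hc hy
    fun w hw => hs hw ha hb hab

private lemma ray_not_mem {z₀ : ℂ} {C : Set ℂ} (hC : StarConvex ℝ z₀ C) {z : ℂ}
    (hz : z ∉ C) {t : ℝ} (ht : 1 ≤ t) : z₀ + t • (z - z₀) ∉ C := by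
  intro h
  apply hz
  have ht0 : 0 < t := lt_of_lt_of_le one_pos ht
  have h1 : (0:ℝ) ≤ 1 - 1/t := by
    have : 1/t ≤ 1 := by
      rw [div_le_one ht0]; exact ht
    linarith
  have h2 : (0:ℝ) ≤ 1/t := by positivity
  have h3 : (1 - 1/t) + 1/t = 1 := by ring
  have := hC h h1 h2 h3
  convert this using 1
  have htne : (t:ℂ) ≠ 0 := by exact_mod_cast ht0.ne'
  simp only [Complex.real_smul]
  push_cast
  field_simp
  ring

private lemma joined_ray {z₀ : ℂ} {C : Set ℂ} (hC : StarConvex ℝ z₀ C) {z : ℂ}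
    (hz : z ∉ C) {t : ℝ} (ht : 1 ≤ t) : JoinedIn Cᶜ z (z₀ + t • (z - z₀)) := by
  apply JoinedIn.of_segment_subset
  rintro w ⟨a, b, ha, hb, hab, rfl⟩
  have hb' : a = 1 - b := by linarith
  subst hb'
  have hkey : (1 - b) • z + b • (z₀ + t • (z - z₀)) = z₀ + (1 - b + b * t) • (z - z₀) := by
    simp only [Complex.real_smul]
    push_cast
    ring
  rw [hkey]
  exact ray_not_mem hC hz (by nlinarith)

/-- For a bounded open set `V ⊆ ℂ` that is star-like with respect to `z₀ ∈ V`, the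
complement of the closure of `V` is connected, and `ℂ \ ∂V` has exactly two connected
components, namely `V` and `ℂ \ V̄`. -/
theorem stmt10 (V : Set ℂ) (hV : IsOpen V) (hb : Bornology.IsBounded V)
    (z₀ : ℂ) (hz₀ : z₀ ∈ V)
    (hstar : ∀ z ∈ V, segment ℝ z₀ z ⊆ V) :
    IsConnected (closure V)ᶜ ∧ IsConnected V ∧
      (frontier V)ᶜ = V ∪ (closure V)ᶜ ∧ Disjoint V (closure V)ᶜ := by
  have hs : StarConvex ℝ z₀ V := starConvex_iff_segment_subset.2 fun y hy => hstar y hy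
  have hsc : StarConvex ℝ z₀ (closure V) := star_closure hs
  -- a bound for the closure
  obtain ⟨R, hR⟩ := hb.subset_closedBall z₀
  have hRc : closure V ⊆ closedBall z₀ R := closure_minimal hR isClosed_closedBall
  have hR0 : 0 ≤ R := by
    have := hRc (subset_closure hz₀)
    simpa using this
  have hrank : 1 < Module.rank ℝ ℂ := by
    exact Complex.rank_real_complex ▸ Nat.one_lt_ofNat
  -- base point outside the closure
  set x : ℂ := z₀ + ((R + 1 : ℝ) : ℂ) with hxdef
  have hxnorm : ‖x - z₀‖ = R + 1 := by
    rw [hxdef]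
    simp only [add_sub_cancel_left, Complex.norm_real, Real.norm_eq_abs]
    exact abs_of_nonneg (by linarith)
  have hx : x ∉ closure V := by
    intro h
    have := hRc h
    rw [mem_closedBall, dist_eq_norm, hxnorm] at this
    linarith
  -- key: complement of closure is path connected
  have hpc : IsPathConnected (closure V)ᶜ := by
    refine ⟨x, hx, ?_⟩
    intro y hy
    have hyz : y ≠ z₀ := fun h => hy (h ▸ subset_closure hz₀)
    have hynorm : 0 < ‖y - z₀‖ := by
      simpa [sub_eq_zero] using hyz
    set r : ℝ := max (R + 1) ‖y - z₀‖ with hrdef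
    have hr1 : R + 1 ≤ r := le_max_left _ _
    have hr2 : ‖y - z₀‖ ≤ r := le_max_right _ _
    have hr0 : 0 < r := lt_of_lt_of_le (by linarith) hr1
    have hsph : sphere z₀ r ⊆ (closure V)ᶜ := by
      intro p hp hpC
      have h1 := hRc hpC
      rw [mem_closedBall, dist_eq_norm] at h1
      rw [mem_sphere_iff_norm] at hp
      rw [hp] at h1
      linarith
    -- join x to the sphere
    set tx : ℝ := r / ‖x - z₀‖ with htxdef
    have htx : 1 ≤ tx := by
      rw [htxdef, hxnorm, le_div_iff₀ (by linarith)]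
      linarith
    have hxj : JoinedIn (closure V)ᶜ x (z₀ + tx • (x - z₀)) := joined_ray hsc hx htx
    have hxsph : z₀ + tx • (x - z₀) ∈ sphere z₀ r := by
      rw [mem_sphere_iff_norm]
      have : z₀ + tx • (x - z₀) - z₀ = tx • (x - z₀) := by ring
      rw [this, norm_smul, Real.norm_eq_abs, abs_of_nonneg (by positivity), htxdef, hxnorm]
      exact div_mul_cancel₀ _ (by linarith)
    -- join y to the sphere
    set ty : ℝ := r / ‖y - z₀‖ with htydef
    have hty : 1 ≤ ty := by
      rw [htydef, le_div_iff₀ hynorm]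
      linarith
    have hyj : JoinedIn (closure V)ᶜ y (z₀ + ty • (y - z₀)) := joined_ray hsc hy hty
    have hysph : z₀ + ty • (y - z₀) ∈ sphere z₀ r := by
      rw [mem_sphere_iff_norm]
      have : z₀ + ty • (y - z₀) - z₀ = ty • (y - z₀) := by ring
      rw [this, norm_smul, Real.norm_eq_abs, abs_of_nonneg (by positivity), htydef]
      exact div_mul_cancel₀ _ hynorm.ne'
    have hsphpc : IsPathConnected (sphere z₀ r) := isPathConnected_sphere hrank z₀ hr0.le
    have hmid : JoinedIn (closure V)ᶜ (z₀ + tx • (x - z₀)) (z₀ + ty • (y - z₀)) :=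
      (hsphpc.joinedIn _ hxsph _ hysph).mono hsph
    exact (hxj.trans hmid).trans hyj.symm
  refine ⟨hpc.isConnected, ?_, ?_, ?_⟩
  · have hVpc : IsPathConnected V := ⟨z₀, hz₀, fun _ hy => JoinedIn.of_segment_subset (hstar _ hy)⟩
    exact hVpc.isConnected
  · rw [hV.frontier_eq, Set.diff_eq, Set.compl_inter, compl_compl, Set.union_comm]
  · exact Set.disjoint_compl_right_iff_subset.2 subset_closure
end

section
/- Let (π_k)_{k∈ℕ} be homeomorphisms of the Riemann sphere converging uniformly to a continuous surjection π : Ĉ → Ĉ, and suppose there exists η > 0 such that: for every compact A ⊆ ℂ with diam A ≤ η, diam π^{-1}(A) < ε. Then there exists k₁ ∈ ℕ such that for all k ≥ k₁ and every compact A with diam A ≤ η, diam π_k^{-1}(A) < ε. -/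
open Metric Filter

/-- Equicontinuity of inverses: if homeomorphisms `π_k` of the sphere converge
uniformly to a continuous surjection `π`, and `π`-preimages of compact sets of
diameter at most `η` have diameter less than `ε`, then the same holds for `π_k`
for all sufficiently large `k`. -/
theorem stmt18 (ε η : ℝ) (hε : 0 < ε) (hη : 0 < η)
    (πk : ℕ → ↥(Metric.sphere (0 : EuclideanSpace ℝ (Fin 3)) 1) ≃ₜ
      ↥(Metric.sphere (0 : EuclideanSpace ℝ (Fin 3)) 1))
    (π : ↥(Metric.sphere (0 : EuclideanSpace ℝ (Fin 3)) 1) →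
      ↥(Metric.sphere (0 : EuclideanSpace ℝ (Fin 3)) 1))
    (hπc : Continuous π) (hπs : Function.Surjective π)
    (hconv : TendstoUniformly (fun k => ⇑(πk k)) π atTop)
    (hη' : ∀ A : Set ↥(Metric.sphere (0 : EuclideanSpace ℝ (Fin 3)) 1),
      IsCompact A → diam A ≤ η → diam (π ⁻¹' A) < ε) :
    ∃ k₁ : ℕ, ∀ k ≥ k₁, ∀ A : Set ↥(Metric.sphere (0 : EuclideanSpace ℝ (Fin 3)) 1),
      IsCompact A → diam A ≤ η → diam (⇑(πk k) ⁻¹' A) < ε := by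
  by_contra h
  push_neg at h
  choose k hk A hAc hAd hAe using h
  -- pick nearly-diametral points in the preimages
  have hpts : ∀ n, ∃ x y, x ∈ ⇑(πk (k n)) ⁻¹' (A n) ∧ y ∈ ⇑(πk (k n)) ⁻¹' (A n) ∧
      ε - 1 / (n + 1) < dist x y := by
    intro n
    by_contra hc
    push_neg at hc
    have hd : diam (⇑(πk (k n)) ⁻¹' (A n)) ≤ max 0 (ε - 1 / (n + 1)) :=
      diam_le_of_forall_dist_le (le_max_left _ _) fun x hx y hy =>
        (hc x y hx hy).trans (le_max_right _ _)
    have h1 : (0 : ℝ) < 1 / (n + 1) := by positivity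
    have : max 0 (ε - 1 / (n + 1)) < ε := by
      rcases max_cases (0 : ℝ) (ε - 1 / (n + 1)) with ⟨he, _⟩ | ⟨he, _⟩ <;> rw [he] <;> linarith
    exact absurd ((hAe n).trans hd) (not_le.mpr this)
  choose x y hx hy hd using hpts
  -- extract convergent subsequences
  obtain ⟨x₀, -, φ, hφ, hxl⟩ := isCompact_univ.tendsto_subseq (fun n => Set.mem_univ (x n))
  obtain ⟨y₀, -, ψ, hψ, hyl⟩ :=
    isCompact_univ.tendsto_subseq (fun n => Set.mem_univ (y (φ n)))
  set m : ℕ → ℕ := φ ∘ ψ with hm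
  have hmn : ∀ n, n ≤ m n := fun n => (hψ.le_apply).trans (hφ.le_apply)
  have hxl' : Tendsto (fun n => x (m n)) atTop (nhds x₀) := hxl.comp hψ.tendsto_atTop
  have hyl' : Tendsto (fun n => y (m n)) atTop (nhds y₀) := hyl
  -- the indices k (m n) tend to infinity
  have hs : Tendsto (fun n => k (m n)) atTop atTop :=
    tendsto_atTop_mono (fun n => (hmn n).trans (hk (m n))) tendsto_id
  have hconv' : TendstoUniformly (fun n => ⇑(πk (k (m n)))) π atTop := by
    rw [Metric.tendstoUniformly_iff] at hconv ⊢
    exact fun δ hδ => hs.eventually (hconv δ hδ)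
  have htx : Tendsto (fun n => (πk (k (m n))) (x (m n))) atTop (nhds (π x₀)) :=
    hconv'.tendsto_comp hπc.continuousAt hxl'
  have hty : Tendsto (fun n => (πk (k (m n))) (y (m n))) atTop (nhds (π y₀)) :=
    hconv'.tendsto_comp hπc.continuousAt hyl'
  -- dist (π x₀) (π y₀) ≤ η
  have hd1 : dist (π x₀) (π y₀) ≤ η := by
    refine le_of_tendsto (htx.dist hty) (Eventually.of_forall fun n => ?_)
    exact (dist_le_diam_of_mem (hAc (m n)).isBounded (hx (m n)) (hy (m n))).trans (hAd (m n))
  -- ε ≤ dist x₀ y₀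
  have hd2 : ε ≤ dist x₀ y₀ := by
    have hlim : Tendsto (fun n : ℕ => ε - 1 / (n + 1)) atTop (nhds ε) := by
      simpa using tendsto_const_nhds.sub (tendsto_one_div_add_atTop_nhds_zero_nat : Tendsto (fun n : ℕ => 1 / ((n : ℝ) + 1)) atTop (nhds 0))
    refine le_of_tendsto_of_tendsto hlim (hxl'.dist hyl') (Eventually.of_forall fun n => ?_)
    have h1 : (1 : ℝ) / (m n + 1) ≤ 1 / (n + 1) := by
      apply one_div_le_one_div_of_le (by positivity)
      have h2 : (n : ℝ) ≤ m n := Nat.cast_le.mpr (hmn n)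
      linarith
    calc ε - 1 / (n + 1) ≤ ε - 1 / (m n + 1) := by linarith
      _ ≤ dist (x (m n)) (y (m n)) := (hd (m n)).le
  -- contradiction with hη'
  have hA₀ : IsCompact ({π x₀, π y₀} : Set _) := (Set.Finite.insert _ (Set.finite_singleton _)).isCompact
  have hdA₀ : diam ({π x₀, π y₀} : Set _) ≤ η := by
    rw [Metric.diam_pair]; exact hd1
  have hfinal := hη' _ hA₀ hdA₀
  have hx₀ : x₀ ∈ π ⁻¹' {π x₀, π y₀} := by simp
  have hy₀ : y₀ ∈ π ⁻¹' {π x₀, π y₀} := by simp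
  have : ε ≤ diam (π ⁻¹' {π x₀, π y₀}) :=
    hd2.trans (dist_le_diam_of_mem isBounded_of_compactSpace hx₀ hy₀)
  linarith
end
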